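/- If U and V are unitary operators on a finite-dimensional complex Hilbert space and ‖U - V‖ ≤ B ≤ 2 (operator norm), then every eigenvalue e^{-itλ} of the unitary UV† (with λ chosen so that -π/t ≤ λ ≤ π/t, t > 0) satisfies |λ| ≤ (1/t)·arccos(1 - B²/2). -/

import Mathlib

open Matrix NormedSpace ComplexOrder

noncomputable def opNorm {n : ℕ} (A : Matrix (Fin n) (Fin n) ℂ) : ℝ :=
  ‖(Matrix.toEuclideanCLM (𝕜 := ℂ) A : EuclideanSpace ℂ (Fin n) →L[ℂ] EuclideanSpace ℂ (Fin n))‖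

noncomputable def traceNorm {n : ℕ} (A : Matrix (Fin n) (Fin n) ℂ) : ℝ :=
  (((Matrix.posSemidef_conjTranspose_mul_self A).1.eigenvectorUnitary.1 *
    diagonal (((↑) : ℝ → ℂ) ∘ (Real.sqrt ·) ∘ (Matrix.posSemidef_conjTranspose_mul_self A).1.eigenvalues) *
    (star (Matrix.posSemidef_conjTranspose_mul_self A).1.eigenvectorUnitary : Matrix (Fin n) (Fin n) ℂ)).trace).re

def IsDensity {n : ℕ} (ρ : Matrix (Fin n) (Fin n) ℂ) : Prop := ρ.PosSemidef ∧ ρ.trace = 1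

lemma norm_exp_mul_I_sub_one_sq (θ : ℝ) :
    ‖Complex.exp ((θ : ℂ) * Complex.I) - 1‖ ^ 2 = 2 - 2 * Real.cos θ := by
  rw [Complex.exp_mul_I, ← Complex.ofReal_cos, ← Complex.ofReal_sin,
    Complex.sq_norm, Complex.normSq_apply]
  simp [Complex.cos_ofReal_re, Complex.sin_ofReal_re]
  nlinarith [Real.sin_sq_add_cos_sq θ]

/-- if U, V are unitary, ‖U - V‖ ≤ B ≤ 2, t > 0, and e^{-itλ} is an
eigenvalue of U V† with -π/t ≤ λ ≤ π/t, then |λ| ≤ (1/t)·arccos(1 - B²/2). -/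
theorem stmt0 {n : ℕ} (U V : Matrix (Fin n) (Fin n) ℂ)
    (hU : U ∈ Matrix.unitaryGroup (Fin n) ℂ) (hV : V ∈ Matrix.unitaryGroup (Fin n) ℂ)
    (t B : ℝ) (ht : 0 < t) (hUV : opNorm (U - V) ≤ B) (hB2 : B ≤ 2)
    (lam : ℝ) (hlo : -(Real.pi / t) ≤ lam) (hhi : lam ≤ Real.pi / t)
    (v : Fin n → ℂ) (hv : v ≠ 0)
    (heig : (U * Vᴴ) *ᵥ v = Complex.exp (-(Complex.I * t * lam)) • v) :
    |lam| ≤ (1 / t) * Real.arccos (1 - B ^ 2 / 2) := by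
  set c : ℂ := Complex.exp (-(Complex.I * t * lam)) with hc
  set f := Matrix.toEuclideanCLM (𝕜 := ℂ) (n := Fin n) with hf
  -- V Vᴴ = 1
  have hVVh : V * Vᴴ = 1 := by
    have := Matrix.mem_unitaryGroup_iff.mp hV
    simpa [Matrix.star_eq_conjTranspose] using this
  have key : (U * Vᴴ - 1 : Matrix (Fin n) (Fin n) ℂ) = (U - V) * Vᴴ := by
    rw [Matrix.sub_mul, hVVh]
  -- f Vᴴ is unitary
  have hVmem : Vᴴ ∈ unitary (Matrix (Fin n) (Fin n) ℂ) := by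
    have : (V : Matrix (Fin n) (Fin n) ℂ) ∈ unitary (Matrix (Fin n) (Fin n) ℂ) := hV
    simpa [Matrix.star_eq_conjTranspose] using Unitary.star_mem this
  have hfV : f Vᴴ ∈ unitary (EuclideanSpace ℂ (Fin n) →L[ℂ] EuclideanSpace ℂ (Fin n)) := by
    constructor
    · rw [← map_star f, ← _root_.map_mul f, hVmem.1, _root_.map_one f]
    · rw [← map_star f, ← _root_.map_mul f, hVmem.2, _root_.map_one f]
  -- opNorm (U*Vᴴ - 1) ≤ B
  have hnormB : opNorm (U * Vᴴ - 1) ≤ B := by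
    have : opNorm (U * Vᴴ - 1) = opNorm (U - V) := by
      rw [key]
      show ‖f ((U - V) * Vᴴ)‖ = ‖f (U - V)‖
      rw [_root_.map_mul]
      exact CStarRing.norm_mul_mem_unitary _ hfV
    rw [this]; exact hUV
  -- eigenvector in EuclideanSpace
  set x : EuclideanSpace ℂ (Fin n) := (WithLp.equiv 2 (Fin n → ℂ)).symm v with hx
  have hx0 : x ≠ 0 := fun h => hv (by
    have := congrArg (WithLp.equiv 2 (Fin n → ℂ)) h
    simpa [hx] using this)
  have happ : f (U * Vᴴ - 1) x = (c - 1) • x := by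
    rw [map_sub, _root_.map_one f, ContinuousLinearMap.sub_apply, ContinuousLinearMap.one_apply]
    have h1 : f (U * Vᴴ) x = (WithLp.equiv 2 (Fin n → ℂ)).symm ((U * Vᴴ) *ᵥ v) := by
      rw [hx, hf, WithLp.equiv_symm_apply, Matrix.toEuclideanCLM_toLp]
    rw [h1, heig]
    simp [sub_smul, hx, WithLp.toLp_smul]
  have hcB : ‖c - 1‖ ≤ B := by
    have h2 : ‖f (U * Vᴴ - 1) x‖ ≤ opNorm (U * Vᴴ - 1) * ‖x‖ :=
      (f (U * Vᴴ - 1)).le_opNorm x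
    rw [happ, norm_smul] at h2
    have hxpos : 0 < ‖x‖ := norm_pos_iff.mpr hx0
    have := le_trans h2 (mul_le_mul_of_nonneg_right hnormB (norm_nonneg x))
    exact le_of_mul_le_mul_right this hxpos
  have hB0 : 0 ≤ B := le_trans (norm_nonneg _) hUV
  -- ‖c - 1‖^2 = 2 - 2 cos (t * lam)
  have hsq : ‖c - 1‖ ^ 2 = 2 - 2 * Real.cos (t * lam) := by
    have hrw : -(Complex.I * t * lam) = ((-(t * lam) : ℝ) : ℂ) * Complex.I := by
      push_cast; ring
    have hθ := norm_exp_mul_I_sub_one_sq (-(t * lam))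
    rw [Real.cos_neg] at hθ
    rw [hc, hrw]
    exact hθ
  have hcos : 1 - B ^ 2 / 2 ≤ Real.cos (t * lam) := by
    have : ‖c - 1‖ ^ 2 ≤ B ^ 2 := by
      exact pow_le_pow_left₀ (norm_nonneg _) hcB 2
    rw [hsq] at this; linarith
  -- |t * lam| ≤ π
  have habs : |t * lam| ≤ Real.pi := by
    rw [abs_le]
    constructor
    · have := mul_le_mul_of_nonneg_left hlo (le_of_lt ht)
      calc -Real.pi = t * (-(Real.pi / t)) := by
            rw [mul_neg, mul_div_cancel₀ _ (ne_of_gt ht)]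
        _ ≤ t * lam := this
    · have := mul_le_mul_of_nonneg_left hhi (le_of_lt ht)
      calc t * lam ≤ t * (Real.pi / t) := this
        _ = Real.pi := mul_div_cancel₀ _ (ne_of_gt ht)
  -- arccos antitone
  have harccos : Real.arccos (Real.cos (t * lam)) ≤ Real.arccos (1 - B ^ 2 / 2) := by
    unfold Real.arccos
    have := Real.monotone_arcsin hcos
    linarith
  have heq : |t * lam| = Real.arccos (Real.cos (t * lam)) := by
    rw [← Real.cos_abs (t * lam), Real.arccos_cos (abs_nonneg _) habs]
  have hfinal : t * |lam| ≤ Real.arccos (1 - B ^ 2 / 2) := by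
    have : |t * lam| ≤ Real.arccos (1 - B ^ 2 / 2) := heq ▸ harccos
    rwa [abs_mul, abs_of_pos ht] at this
  rw [one_div, inv_mul_eq_div, le_div_iff₀ ht]
  linarith [hfinal]
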